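/- Let β, d, κ > 0 and let L, A : ℝ → ℝ be differentiable, nonnegative, and bounded on [0,∞), satisfying A'(t) = β·L(t) − d·A(t)² and (L + A)'(t) ≤ −κ·A(t)² for all t ≥ 0. Then A(t) → 0 and L(t) → 0 as t → ∞. Consequently, any function A_p with 0 ≤ A_p(t) ≤ A(t) also satisfies A_p(t) → 0. -/

import Mathlib

lemma slope_bound_above (f : ℝ → ℝ) (hf : Differentiable ℝ f) {C a b : ℝ} (hab : a ≤ b)
    (h : ∀ t ∈ Set.Icc a b, deriv f t ≤ C) : f b - f a ≤ C * (b - a) := by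
  have hg : AntitoneOn (fun t => f t - C * t) (Set.Icc a b) := by
    apply antitoneOn_of_deriv_nonpos (convex_Icc a b)
    · exact (hf.sub (by fun_prop)).continuous.continuousOn
    · exact fun t _ => (hf.sub (by fun_prop)).differentiableAt.differentiableWithinAt
    · intro t ht
      rw [interior_Icc] at ht
      have hder : deriv (fun t => f t - C * t) t = deriv f t - C := by
        rw [deriv_fun_sub (hf t) (by fun_prop)]
        have : deriv (fun t : ℝ => C * t) t = C := by
          simpa using deriv_const_mul C (differentiableAt_id (x := t))
        simpa using this
      rw [hder]
      have := h t (Set.Ioo_subset_Icc_self ht)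
      linarith
  have := hg (Set.left_mem_Icc.2 hab) (Set.right_mem_Icc.2 hab) hab
  simp only at this
  nlinarith [this]

lemma slope_bound_below (f : ℝ → ℝ) (hf : Differentiable ℝ f) {c a b : ℝ} (hab : a ≤ b)
    (h : ∀ t ∈ Set.Icc a b, c ≤ deriv f t) : c * (b - a) ≤ f b - f a := by
  have := slope_bound_above (fun t => -f t) hf.neg (C := -c) hab (fun t ht => by
    rw [deriv.fun_neg]; linarith [h t ht])
  linarith

set_option maxHeartbeats 1000000 in
/-- Global extinction core: if `L, A` are nonnegative, bounded, differentiable,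
`A' = βL - dA²` and `(L+A)' ≤ -κ A²`, then `A → 0`, `L → 0`, and any function
squeezed between `0` and `A` also tends to `0`. -/
theorem stmt_6 (β d κ : ℝ) (hβ : 0 < β) (hd : 0 < d) (hκ : 0 < κ)
    (L A : ℝ → ℝ) (hL : Differentiable ℝ L) (hA : Differentiable ℝ A)
    (hLnonneg : ∀ t : ℝ, 0 ≤ t → 0 ≤ L t) (hAnonneg : ∀ t : ℝ, 0 ≤ t → 0 ≤ A t)
    (hLbdd : ∃ M : ℝ, ∀ t : ℝ, 0 ≤ t → L t ≤ M)
    (hAbdd : ∃ M : ℝ, ∀ t : ℝ, 0 ≤ t → A t ≤ M)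
    (hAeq : ∀ t : ℝ, 0 ≤ t → deriv A t = β * L t - d * (A t) ^ 2)
    (hLA : ∀ t : ℝ, 0 ≤ t → deriv (fun s => L s + A s) t ≤ -κ * (A t) ^ 2) :
    Filter.Tendsto A Filter.atTop (nhds 0) ∧
    Filter.Tendsto L Filter.atTop (nhds 0) ∧
    (∀ Ap : ℝ → ℝ, (∀ t : ℝ, 0 ≤ t → 0 ≤ Ap t ∧ Ap t ≤ A t) →
      Filter.Tendsto Ap Filter.atTop (nhds 0)) := by
  obtain ⟨ML, hML⟩ := hLbdd
  obtain ⟨MA, hMA⟩ := hAbdd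
  obtain ⟨M, hMdef⟩ : ∃ M : ℝ, M = max 1 (max ML MA) := ⟨_, rfl⟩
  have hM1 : (1:ℝ) ≤ M := hMdef ▸ le_max_left _ _
  have hM0 : (0:ℝ) < M := lt_of_lt_of_le one_pos hM1
  have hAM : ∀ t : ℝ, 0 ≤ t → A t ≤ M := fun t ht =>
    le_trans (hMA t ht) (hMdef ▸ le_trans (le_max_right ML MA) (le_max_right _ _))
  have hLM : ∀ t : ℝ, 0 ≤ t → L t ≤ M := fun t ht =>
    le_trans (hML t ht) (hMdef ▸ le_trans (le_max_left ML MA) (le_max_right _ _))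
  have hA2M : ∀ t : ℝ, 0 ≤ t → (A t) ^ 2 ≤ M ^ 2 := by
    intro t ht
    have h1 := hAnonneg t ht
    have h2 := hAM t ht
    nlinarith
  obtain ⟨V, hVdef⟩ : ∃ V : ℝ → ℝ, V = fun s => L s + A s := ⟨_, rfl⟩
  have hV : Differentiable ℝ V := hVdef ▸ hL.add hA
  have hVnonneg : ∀ t : ℝ, 0 ≤ t → 0 ≤ V t := fun t ht =>
    hVdef ▸ add_nonneg (hLnonneg t ht) (hAnonneg t ht)
  have hLA' : ∀ t : ℝ, 0 ≤ t → deriv V t ≤ -κ * (A t) ^ 2 := by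
    intro t ht; rw [hVdef]; exact hLA t ht
  have hVderiv : ∀ t : ℝ, 0 ≤ t → deriv V t ≤ 0 := by
    intro t ht
    have h1 := hLA' t ht
    have h2 := sq_nonneg (A t)
    nlinarith
  have hVmono : ∀ s u : ℝ, 0 ≤ s → s ≤ u → V u ≤ V s := by
    intro s u hs hsu
    have := slope_bound_above V hV (C := 0) hsu (fun t ht =>
      hVderiv t (le_trans hs ht.1))
    nlinarith
  obtain ⟨C, hCdef⟩ : ∃ C : ℝ, C = d * M ^ 2 + β * M + 1 := ⟨_, rfl⟩
  have hC0 : 0 < C := by rw [hCdef]; positivity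
  have hAder_lb : ∀ t : ℝ, 0 ≤ t → -C ≤ deriv A t := by
    intro t ht
    rw [hAeq t ht, hCdef]
    have h1 := hA2M t ht
    have h2 := hLnonneg t ht
    nlinarith
  have hAtend : Filter.Tendsto A Filter.atTop (nhds 0) := by
    rw [Metric.tendsto_atTop]
    intro ε hε
    by_contra hcon
    push_neg at hcon
    have hfreq : ∀ N : ℝ, ∃ t : ℝ, N ≤ t ∧ 0 ≤ t ∧ ε ≤ A t := by
      intro N
      obtain ⟨t, ht1, ht2⟩ := hcon (max N 0)
      have ht0 : (0:ℝ) ≤ t := le_trans (le_max_right N 0) ht1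
      refine ⟨t, le_trans (le_max_left N 0) ht1, ht0, ?_⟩
      rwa [Real.dist_eq, sub_zero, abs_of_nonneg (hAnonneg t ht0)] at ht2
    obtain ⟨δ, hδdef⟩ : ∃ δ : ℝ, δ = ε / (2 * C) := ⟨_, rfl⟩
    have hδ0 : 0 < δ := by rw [hδdef]; positivity
    have hCδ : C * δ = ε / 2 := by rw [hδdef]; field_simp
    have hdrop : ∀ t : ℝ, 0 ≤ t → ε ≤ A t →
        V (t + δ) ≤ V t - κ * (ε/2)^2 * δ := by
      intro t ht hAt
      have hstay : ∀ s ∈ Set.Icc t (t + δ), ε / 2 ≤ A s := by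
        intro s hs
        have hts : t ≤ s := hs.1
        have hsδ : s ≤ t + δ := hs.2
        have := slope_bound_below A hA (c := -C) hts (fun u hu =>
          hAder_lb u (le_trans ht hu.1))
        have hCs : C * (s - t) ≤ C * δ := by
          apply mul_le_mul_of_nonneg_left _ (le_of_lt hC0)
          linarith
        nlinarith
      have hVd : ∀ s ∈ Set.Icc t (t + δ), deriv V s ≤ -κ * (ε/2)^2 := by
        intro s hs
        have hs0 : 0 ≤ s := le_trans ht hs.1
        have h1 := hLA' s hs0
        have h2 := hstay s hs
        have hε2 : 0 ≤ ε / 2 := by linarith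
        have h3 : (ε/2)^2 ≤ (A s)^2 := by nlinarith
        calc deriv V s ≤ -κ * (A s)^2 := h1
          _ ≤ -κ * (ε/2)^2 := by nlinarith
      have := slope_bound_above V hV (C := -κ * (ε/2)^2) (by linarith) hVd
      nlinarith [this]
    obtain ⟨c₀, hc₀def⟩ : ∃ c₀ : ℝ, c₀ = κ * (ε/2)^2 * δ := ⟨_, rfl⟩
    have hc₀0 : 0 < c₀ := by rw [hc₀def]; positivity
    obtain ⟨t₀, _, ht₀0, _⟩ := hfreq 0
    have hseq : ∀ n : ℕ, ∃ t : ℝ, 0 ≤ t ∧ V t ≤ V t₀ - n * c₀ := by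
      intro n
      induction n with
      | zero => exact ⟨t₀, ht₀0, by simp⟩
      | succ n ih =>
        obtain ⟨t, ht0, htV⟩ := ih
        obtain ⟨u, hu1, hu0, huA⟩ := hfreq t
        have h1 := hdrop u hu0 huA
        have h2 : V u ≤ V t := hVmono t u ht0 hu1
        refine ⟨u + δ, by linarith, ?_⟩
        push_cast
        rw [hc₀def] at htV ⊢
        linarith
    obtain ⟨n, hn⟩ := exists_nat_gt (V t₀ / c₀)
    obtain ⟨t, ht0, htV⟩ := hseq n
    have hV0 := hVnonneg t ht0
    have : V t₀ < n * c₀ := by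
      rw [div_lt_iff₀ hc₀0] at hn
      linarith
    linarith
  refine ⟨hAtend, ?_, ?_⟩
  · rw [Metric.tendsto_atTop]
    intro ε hε
    by_contra hcon
    push_neg at hcon
    have hLder_ub : ∀ t : ℝ, 0 ≤ t → deriv L t ≤ C := by
      intro t ht
      have hsum : deriv V t = deriv L t + deriv A t := by
        rw [hVdef]; exact deriv_add (hL t) (hA t)
      have h1 := hLA' t ht
      have h2 := hAeq t ht
      have h3 := hA2M t ht
      have h4 := hLnonneg t ht
      have h5 := sq_nonneg (A t)
      have h6 : deriv L t = deriv V t - deriv A t := by rw [hsum]; ring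
      rw [h6, h2, hCdef]
      nlinarith
    obtain ⟨δ, hδdef⟩ : ∃ δ : ℝ, δ = ε / (2 * C) := ⟨_, rfl⟩
    have hδ0 : 0 < δ := by rw [hδdef]; positivity
    have hCδ : C * δ = ε / 2 := by rw [hδdef]; field_simp
    obtain ⟨ε', hε'def⟩ : ∃ ε' : ℝ,
        ε' = min (Real.sqrt (β * ε / (4 * d))) (β * ε / 8 * δ) := ⟨_, rfl⟩
    have hε'0 : 0 < ε' := by
      rw [hε'def]
      apply lt_min
      · exact Real.sqrt_pos.2 (by positivity)
      · positivity
    have hε'sq : d * ε' ^ 2 ≤ β * ε / 4 := by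
      have h1 : ε' ≤ Real.sqrt (β * ε / (4 * d)) := hε'def ▸ min_le_left _ _
      have h2 : ε' ^ 2 ≤ β * ε / (4 * d) := by
        have hs := Real.sq_sqrt (le_of_lt (show (0:ℝ) < β * ε / (4 * d) by positivity))
        nlinarith [le_of_lt hε'0]
      have h3 : d * (β * ε / (4 * d)) = β * ε / 4 := by field_simp
      calc d * ε' ^ 2 ≤ d * (β * ε / (4 * d)) := by nlinarith
        _ = β * ε / 4 := h3
    rw [Metric.tendsto_atTop] at hAtend
    obtain ⟨N₀, hN₀⟩ := hAtend ε' hε'0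
    have hAsmall : ∀ t : ℝ, max N₀ 0 ≤ t → A t < ε' := by
      intro t ht
      have ht0 : (0:ℝ) ≤ t := le_trans (le_max_right _ _) ht
      have := hN₀ t (le_trans (le_max_left _ _) ht)
      rwa [Real.dist_eq, sub_zero, abs_of_nonneg (hAnonneg t ht0)] at this
    obtain ⟨t, ht1, ht2⟩ := hcon (max N₀ 0 + δ)
    have hmax0 : (0:ℝ) ≤ max N₀ 0 := le_max_right _ _
    have ht0 : (0:ℝ) ≤ t := by linarith
    have hLt : ε ≤ L t := by
      rwa [Real.dist_eq, sub_zero, abs_of_nonneg (hLnonneg t ht0)] at ht2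
    have htδ0 : (0:ℝ) ≤ t - δ := by linarith
    have hstayL : ∀ s ∈ Set.Icc (t - δ) t, ε / 2 ≤ L s := by
      intro s hs
      have hs0 : 0 ≤ s := le_trans htδ0 hs.1
      have := slope_bound_above L hL (C := C) hs.2 (fun u hu =>
        hLder_ub u (le_trans hs0 hu.1))
      have hCs : C * (t - s) ≤ C * δ := by
        apply mul_le_mul_of_nonneg_left _ (le_of_lt hC0)
        linarith [hs.1]
      nlinarith
    have hder : ∀ s ∈ Set.Icc (t - δ) t, β * ε / 4 ≤ deriv A s := by
      intro s hs
      have hs0 : 0 ≤ s := le_trans htδ0 hs.1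
      have hsN : max N₀ 0 ≤ s := by linarith [hs.1]
      have hA' := hAsmall s hsN
      have hA0 := hAnonneg s hs0
      have hAsq : d * (A s)^2 ≤ β * ε / 4 := by
        have : (A s)^2 ≤ ε'^2 := by nlinarith
        nlinarith
      rw [hAeq s hs0]
      have := hstayL s hs
      nlinarith
    have hgrow := slope_bound_below A hA (c := β * ε / 4) (by linarith) hder
    rw [show t - (t - δ) = δ from by ring] at hgrow
    have hAtδ : 0 ≤ A (t - δ) := hAnonneg _ htδ0
    have hAt := hAsmall t (by linarith)
    have hε'le : ε' ≤ β * ε / 8 * δ := hε'def ▸ min_le_right _ _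
    nlinarith
  · intro Ap hAp
    apply squeeze_zero' (t₀ := Filter.atTop)
    · filter_upwards [Filter.eventually_ge_atTop (0:ℝ)] with t ht
      exact (hAp t ht).1
    · filter_upwards [Filter.eventually_ge_atTop (0:ℝ)] with t ht
      exact (hAp t ht).2
    · exact hAtend
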